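/- arXiv:2102.09479 — 7 statements merged into one kernel-verified Lean document; each statement's English description precedes it below -/
import Mathlib

section
/- Exactness of the functional Lagrangian dual at the optimal multipliers (Theorem 1, second part): Let X_0, ..., X_K be nonempty measurable spaces, pi_k Markov kernels from X_k to X_{k+1} for k = 0, ..., K-1, P_0 a set of probability measures on X_0, and suppose psi(q) = ∫ c dq for a bounded measurable function c : X_K -> R. Define p_{k+1} as the pushforward of p_k through pi_k, and OPT = sup_{p_0 in P_0} ∫ c d(p_K). Define lambda*_K = c and, for k = K-1 down to 1, lambda*_k(x) = ∫_{X_{k+1}} lambda*_{k+1}(y) d(pi_k(x))(y). Then g(lambda*) = OPT, where g(lambda) = sup_{p_0 in P_0} ∫_{X_0} (∫_{X_1} lambda_1(y) d(pi_0(x))(y)) dp_0(x) + sum_{k=1}^{K-1} sup_{x in X_k} (∫_{X_{k+1}} lambda_{k+1}(y) d(pi_k(x))(y) - lambda_k(x)) + sup_{q probability measure on X_K} (∫ c dq - ∫ lambda_K dq). -/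
open MeasureTheory ProbabilityTheory

/-- The sequence of distributions over activations: `p 0 = p0` and `p (k+1)` is the
pushforward of `p k` through the Markov kernel `π k`. -/
noncomputable def seqMeasure {X : ℕ → Type*} [∀ k, MeasurableSpace (X k)]
    (π : ∀ k, Kernel (X k) (X (k + 1))) (p0 : Measure (X 0)) :
    ∀ k, Measure (X k)
  | 0 => p0
  | k + 1 => (seqMeasure π p0 k).bind (fun x => π k x)

lemma my_bind_eq_snd_compProd {α β : Type*} [MeasurableSpace α] [MeasurableSpace β]
    (p : Measure α) [SFinite p] (κ : Kernel α β) [IsSFiniteKernel κ] :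
    p.bind (fun x => κ x) = (p ⊗ₘ κ).snd := by
  ext s hs
  rw [Measure.bind_apply hs κ.measurable.aemeasurable, Measure.snd_apply hs,
    Measure.compProd_apply (measurable_snd hs)]
  rfl

lemma my_integral_bind {α β : Type*} [MeasurableSpace α] [MeasurableSpace β]
    (p : Measure α) [IsFiniteMeasure p] (κ : Kernel α β) [IsMarkovKernel κ]
    (f : β → ℝ) (hf : Measurable f) (M : ℝ) (hM : ∀ y, |f y| ≤ M) :
    ∫ y, f y ∂(p.bind fun x => κ x) = ∫ x, ∫ y, f y ∂(κ x) ∂p := by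
  have hint : Integrable (fun z : α × β => f z.2) (p ⊗ₘ κ) := by
    refine ⟨(hf.comp measurable_snd).aestronglyMeasurable, ?_⟩
    exact HasFiniteIntegral.of_bounded (C := M)
      (Filter.Eventually.of_forall fun z => by simpa using hM z.2)
  rw [my_bind_eq_snd_compProd, Measure.snd,
    integral_map (φ := Prod.snd) measurable_snd.aemeasurable hf.aestronglyMeasurable,
    MeasureTheory.Measure.integral_compProd hint]

/-- Exactness of the functional Lagrangian dual at the optimal multipliers
(Theorem 1, second part): if `ψ q = ∫ c dq` and `lam` satisfies the backward recursion
`lam K = c`, `lam k x = ∫ lam (k+1) y ∂(π k x)`, then the dual `g lam` equals `OPT`. -/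
theorem functional_lagrangian_dual_exact
    {X : ℕ → Type*} [∀ k, MeasurableSpace (X k)] [∀ k, Nonempty (X k)]
    (K : ℕ) (hK : 1 ≤ K)
    (π : ∀ k, Kernel (X k) (X (k + 1))) [∀ k, IsMarkovKernel (π k)]
    (P0 : Set (Measure (X 0))) (hP0 : ∀ p ∈ P0, IsProbabilityMeasure p)
    (c : X K → ℝ) (hcmeas : Measurable c) (hcbdd : ∃ M : ℝ, ∀ x, |c x| ≤ M)
    (lam : ∀ k, X k → ℝ)
    (hlamK : lam K = c)
    (hlam : ∀ k, 1 ≤ k → k < K → lam k = fun x => ∫ y, lam (k + 1) y ∂(π k x)) :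
    ((⨆ p0 ∈ P0, ((∫ x, ∫ y, lam 1 y ∂(π 0 x) ∂p0 : ℝ) : EReal))
        + ∑ k ∈ Finset.Icc 1 (K - 1),
            ⨆ x : X k, (((∫ y, lam (k + 1) y ∂(π k x)) - lam k x : ℝ) : EReal)
        + ⨆ (q : Measure (X K)) (_ : IsProbabilityMeasure q),
            (((∫ y, c y ∂q) - ∫ y, lam K y ∂q : ℝ) : EReal)) =
      ⨆ p0 ∈ P0, ((∫ y, c y ∂(seqMeasure π p0 K) : ℝ) : EReal) := by
  obtain ⟨M, hM⟩ := hcbdd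
  -- measurability and boundedness of all multipliers
  have H : ∀ d k, k + d = K → 1 ≤ k → Measurable (lam k) ∧ ∀ x, |lam k x| ≤ M := by
    intro d
    induction d with
    | zero =>
      intro k hk _
      have : k = K := by omega
      subst this
      rw [hlamK]
      exact ⟨hcmeas, hM⟩
    | succ n ih =>
      intro k hk hk1
      obtain ⟨hm, hb⟩ := ih (k + 1) (by omega) (by omega)
      have hkK : k < K := by omega
      rw [hlam k hk1 hkK]
      constructor
      · exact (StronglyMeasurable.integral_kernel_prod_right (κ := π k)
          (f := fun (_ : X k) y => lam (k + 1) y)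
          ((hm.comp measurable_snd).stronglyMeasurable)).measurable
      · intro x
        rw [abs_le]
        constructor
        · have := norm_integral_le_of_norm_le_const (μ := π k x)
            (f := fun y => lam (k + 1) y) (C := M)
            (Filter.Eventually.of_forall fun y => by simpa using hb y)
          simp only [measure_univ, ENNReal.toReal_one, probReal_univ, mul_one] at this
          have := (abs_le.mp (by simpa using this)).1
          linarith
        · have := norm_integral_le_of_norm_le_const (μ := π k x)
            (f := fun y => lam (k + 1) y) (C := M)
            (Filter.Eventually.of_forall fun y => by simpa using hb y)
          simp only [measure_univ, ENNReal.toReal_one, probReal_univ, mul_one] at this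
          exact (abs_le.mp (by simpa using this)).2
  -- probability measures along the sequence
  have hprob : ∀ p0 ∈ P0, ∀ k, IsProbabilityMeasure (seqMeasure π p0 k) := by
    intro p0 hp0 k
    induction k with
    | zero => exact hP0 p0 hp0
    | succ n ih =>
      show IsProbabilityMeasure ((seqMeasure π p0 n).bind fun x => π n x)
      rw [my_bind_eq_snd_compProd]
      infer_instance
  -- the integral chain
  have chain : ∀ p0 ∈ P0, ∀ d k, k + d = K → 1 ≤ k →
      ∫ y, lam k y ∂(seqMeasure π p0 k) = ∫ y, c y ∂(seqMeasure π p0 K) := by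
    intro p0 hp0 d
    induction d with
    | zero =>
      intro k hk _
      have : k = K := by omega
      subst this
      rw [hlamK]
    | succ n ih =>
      intro k hk hk1
      have hkK : k < K := by omega
      obtain ⟨hm, hb⟩ := H n (k + 1) (by omega) (by omega)
      have := hprob p0 hp0 k
      calc ∫ y, lam k y ∂(seqMeasure π p0 k)
          = ∫ x, ∫ y, lam (k + 1) y ∂(π k x) ∂(seqMeasure π p0 k) := by
            rw [hlam k hk1 hkK]
        _ = ∫ y, lam (k + 1) y ∂((seqMeasure π p0 k).bind fun x => π k x) :=
            (my_integral_bind _ _ _ hm M hb).symm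
        _ = ∫ y, lam (k + 1) y ∂(seqMeasure π p0 (k + 1)) := rfl
        _ = ∫ y, c y ∂(seqMeasure π p0 K) := ih (k + 1) (by omega) (by omega)
  -- first term equals OPT
  have hfirst : (⨆ p0 ∈ P0, ((∫ x, ∫ y, lam 1 y ∂(π 0 x) ∂p0 : ℝ) : EReal)) =
      ⨆ p0 ∈ P0, ((∫ y, c y ∂(seqMeasure π p0 K) : ℝ) : EReal) := by
    refine iSup_congr fun p0 => ?_
    refine iSup_congr fun hp0 => ?_
    obtain ⟨hm1, hb1⟩ := H (K - 1) 1 (by omega) le_rfl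
    have := hP0 p0 hp0
    have h1 : ∫ x, ∫ y, lam 1 y ∂(π 0 x) ∂p0 = ∫ y, lam 1 y ∂(seqMeasure π p0 1) := by
      have : seqMeasure π p0 1 = p0.bind fun x => π 0 x := rfl
      rw [this, my_integral_bind _ _ _ hm1 M hb1]
    rw [h1, chain p0 hp0 (K - 1) 1 (by omega) le_rfl]
  -- last term is zero
  have hlast : (⨆ (q : Measure (X K)) (_ : IsProbabilityMeasure q),
      (((∫ y, c y ∂q) - ∫ y, lam K y ∂q : ℝ) : EReal)) = 0 := by
    rw [hlamK]
    refine le_antisymm (iSup₂_le fun q hq => by norm_num) ?_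
    obtain ⟨x⟩ := (inferInstance : Nonempty (X K))
    have h0 : ((((∫ y, c y ∂(Measure.dirac x)) - ∫ y, c y ∂(Measure.dirac x) : ℝ)) : EReal)
        = (0 : EReal) := by norm_num
    calc (0 : EReal) = (((∫ y, c y ∂(Measure.dirac x)) - ∫ y, c y ∂(Measure.dirac x) : ℝ) : EReal) :=
          h0.symm
      _ ≤ _ := le_iSup₂ (f := fun q (_ : IsProbabilityMeasure q) =>
          (((∫ y, c y ∂q) - ∫ y, c y ∂q : ℝ) : EReal)) (Measure.dirac x) inferInstance
  -- middle sum (with the trailing sup nested inside) is zero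
  have hsum : (∑ k ∈ Finset.Icc 1 (K - 1),
      ⨆ x : X k, ((((∫ y, lam (k + 1) y ∂(π k x)) - lam k x : ℝ) : EReal)
        + ⨆ (q : Measure (X K)) (_ : IsProbabilityMeasure q),
            (((∫ y, c y ∂q) - ∫ y, lam K y ∂q : ℝ) : EReal))) = 0 := by
    refine Finset.sum_eq_zero fun k hk => ?_
    obtain ⟨hk1, hk2⟩ := Finset.mem_Icc.mp hk
    have hkK : k < K := by omega
    have hx : ∀ x : X k, ((((∫ y, lam (k + 1) y ∂(π k x)) - lam k x : ℝ) : EReal)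
        + ⨆ (q : Measure (X K)) (_ : IsProbabilityMeasure q),
            (((∫ y, c y ∂q) - ∫ y, lam K y ∂q : ℝ) : EReal)) = 0 := by
      intro x
      rw [hlast, add_zero, hlam k hk1 hkK]
      norm_num
    exact (iSup_congr hx).trans iSup_const
  rw [hfirst, hsum, add_zero]
end

section
/- First-layer bound with linear-exponential multipliers via a convex program (Proposition 1, second inequality, proved in the appendix for elementwise ReLU activation): Let l2 <= u2 in R^n (componentwise), w2 an m-by-n real matrix, b2 in R^m, beta in R^m, alpha, gamma in R^n, kappa in R, and let ReLU(z) = max(z, 0) applied componentwise. Then for every eta in R^n and every zeta > 0: sup over x with l2 <= x <= u2 of [beta^T (w2 ReLU(x) + b2) - alpha^T x - exp(gamma^T x + kappa)] <= zeta (log(zeta) - 1 - kappa) + beta^T b2 + sum_{i=1}^n max((eta + w2^T beta)_i ReLU(l2_i), (eta + w2^T beta)_i ReLU(u2_i)) + sum_{i=1}^n sup over z in [l2_i, u2_i] of (-(alpha_i + zeta gamma_i) z - eta_i ReLU(z)). -/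
open Matrix

/-- First-layer bound with linear-exponential multipliers via a convex program
(Proposition 1, second inequality, for elementwise ReLU activation): for every
dual variables `η ∈ ℝ^n` and `ζ > 0`,
`sup_{l2 ≤ x ≤ u2} [βᵀ(w2 ReLU(x) + b2) - αᵀx - exp(γᵀx + κ)]`
is bounded by the stated expression. -/
theorem first_layer_linexp_relu_bound
    (n m : ℕ) (l2 u2 : Fin n → ℝ) (hlu : l2 ≤ u2)
    (w2 : Matrix (Fin m) (Fin n) ℝ) (b2 β : Fin m → ℝ)
    (α γ : Fin n → ℝ) (κ : ℝ)
    (η : Fin n → ℝ) (ζ : ℝ) (hζ : 0 < ζ) :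
    (⨆ x ∈ Set.Icc l2 u2,
        ((β ⬝ᵥ (w2 *ᵥ (fun i => max (x i) 0) + b2) - α ⬝ᵥ x
            - Real.exp (γ ⬝ᵥ x + κ) : ℝ) : EReal)) ≤
      ((ζ * (Real.log ζ - 1 - κ) + β ⬝ᵥ b2
          + ∑ i, max ((η i + (β ᵥ* w2) i) * max (l2 i) 0)
              ((η i + (β ᵥ* w2) i) * max (u2 i) 0) : ℝ) : EReal)
        + ∑ i, ⨆ z ∈ Set.Icc (l2 i) (u2 i),
            ((-(α i + ζ * γ i) * z - η i * max z 0 : ℝ) : EReal) := by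
  refine iSup₂_le fun x hx => ?_
  obtain ⟨hx1, hx2⟩ := hx
  set C : ℝ := ζ * (Real.log ζ - 1 - κ) + β ⬝ᵥ b2
          + ∑ i, max ((η i + (β ᵥ* w2) i) * max (l2 i) 0)
              ((η i + (β ᵥ* w2) i) * max (u2 i) 0) with hC
  set s : Fin n → ℝ := fun i => -(α i + ζ * γ i) * x i - η i * max (x i) 0 with hs
  have key : β ⬝ᵥ (w2 *ᵥ (fun i => max (x i) 0) + b2) - α ⬝ᵥ x
      - Real.exp (γ ⬝ᵥ x + κ) ≤ C + ∑ i, s i := by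
    have hexp : -Real.exp (γ ⬝ᵥ x + κ) ≤ ζ * (Real.log ζ - 1 - κ) - ζ * (γ ⬝ᵥ x) := by
      have h := Real.add_one_le_exp ((γ ⬝ᵥ x + κ) - Real.log ζ)
      rw [Real.exp_sub, Real.exp_log hζ] at h
      have h2 := mul_le_mul_of_nonneg_left h hζ.le
      rw [mul_div_cancel₀ _ hζ.ne'] at h2
      nlinarith
    have hdec : β ⬝ᵥ (w2 *ᵥ (fun i => max (x i) 0) + b2)
        = (∑ i, (β ᵥ* w2) i * max (x i) 0) + β ⬝ᵥ b2 := by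
      rw [dotProduct_add, dotProduct_mulVec]
      rfl
    have hsum : (∑ i, (β ᵥ* w2) i * max (x i) 0) - α ⬝ᵥ x - ζ * (γ ⬝ᵥ x)
        ≤ (∑ i, max ((η i + (β ᵥ* w2) i) * max (l2 i) 0)
              ((η i + (β ᵥ* w2) i) * max (u2 i) 0)) + ∑ i, s i := by
      rw [dotProduct, dotProduct, Finset.mul_sum, ← Finset.sum_add_distrib]
      have : ∀ i ∈ Finset.univ, (β ᵥ* w2) i * max (x i) 0 - α i * x i - ζ * (γ i * x i)
          ≤ max ((η i + (β ᵥ* w2) i) * max (l2 i) 0)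
              ((η i + (β ᵥ* w2) i) * max (u2 i) 0) + s i := by
        intro i _
        have hrl : max (l2 i) 0 ≤ max (x i) 0 := max_le_max (hx1 i) le_rfl
        have hru : max (x i) 0 ≤ max (u2 i) 0 := max_le_max (hx2 i) le_rfl
        have hmax : (η i + (β ᵥ* w2) i) * max (x i) 0
            ≤ max ((η i + (β ᵥ* w2) i) * max (l2 i) 0)
              ((η i + (β ᵥ* w2) i) * max (u2 i) 0) := by
          rcases le_total 0 (η i + (β ᵥ* w2) i) with hc | hc
          · exact le_max_of_le_right (mul_le_mul_of_nonneg_left hru hc)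
          · exact le_max_of_le_left (mul_le_mul_of_nonpos_left hrl hc)
        simp only [hs]
        nlinarith [hmax]
      rw [← Finset.sum_sub_distrib, ← Finset.sum_sub_distrib]
      exact Finset.sum_le_sum this
    have := sub_le_sub (sub_le_sub_right (le_of_eq hdec) (α ⬝ᵥ x)) (le_refl (Real.exp (γ ⬝ᵥ x + κ)))
    calc β ⬝ᵥ (w2 *ᵥ (fun i => max (x i) 0) + b2) - α ⬝ᵥ x - Real.exp (γ ⬝ᵥ x + κ)
        = ((∑ i, (β ᵥ* w2) i * max (x i) 0) + β ⬝ᵥ b2) - α ⬝ᵥ x - Real.exp (γ ⬝ᵥ x + κ) := by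
          rw [hdec]
      _ ≤ ((∑ i, (β ᵥ* w2) i * max (x i) 0) + β ⬝ᵥ b2) - α ⬝ᵥ x
            + (ζ * (Real.log ζ - 1 - κ) - ζ * (γ ⬝ᵥ x)) := by linarith
      _ ≤ C + ∑ i, s i := by rw [hC]; linarith
  calc ((β ⬝ᵥ (w2 *ᵥ (fun i => max (x i) 0) + b2) - α ⬝ᵥ x
            - Real.exp (γ ⬝ᵥ x + κ) : ℝ) : EReal)
      ≤ ((C + ∑ i, s i : ℝ) : EReal) := EReal.coe_le_coe_iff.mpr key
    _ = (C : EReal) + ∑ i, ((s i : ℝ) : EReal) := by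
        rw [EReal.coe_add]
        congr 1
        exact map_sum (⟨⟨Real.toEReal, EReal.coe_zero⟩, EReal.coe_add⟩ : ℝ →+ EReal) _ _
    _ ≤ (C : EReal) + ∑ i, ⨆ z ∈ Set.Icc (l2 i) (u2 i),
            ((-(α i + ζ * γ i) * z - η i * max z 0 : ℝ) : EReal) := by
        refine add_le_add (le_refl _) (Finset.sum_le_sum fun i _ => ?_)
        exact le_iSup₂ (f := fun z (_ : z ∈ Set.Icc (l2 i) (u2 i)) =>
          ((-(α i + ζ * γ i) * z - η i * max z 0 : ℝ) : EReal)) (x i) ⟨hx1 i, hx2 i⟩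
end

section
/- Upper bound for the output-layer softmax problem with affine multipliers (Proposition 2): Let X_K = {x in R^n : l <= x <= u} be a nonempty box, let i* in {1, ..., n}, and define c(x) = exp(x_{i*}) / sum_{j=1}^n exp(x_j). Let lambda_K : R^n -> R be an affine function. Let t_1 <= t_2 <= ... <= t_N be real numbers with t_1 = min_{x in X_K} c(x) and t_N = max_{x in X_K} c(x). For i = 1, ..., N-1 define M_i = sup of -lambda_K(x) over all x in X_K satisfying t_i * sum_{j=1}^n exp(x_j - x_{i*}) <= 1. Then max_{x in X_K} (c(x) - lambda_K(x)) <= max_{1 <= i <= N-1} (M_i + t_{i+1}). -/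
/-- Upper bound for the output-layer softmax problem with affine multipliers
(Proposition 2): with `c x = exp (x i⋆) / ∑ j exp (x j)` (the softmax probability of
class `i⋆`), an affine multiplier `lamK`, and thresholds `t 0 ≤ … ≤ t (N-1)` going
from the minimum to the maximum of `c` over the box, the maximum of `c - lamK` over
the box is bounded by `max_i (M i + t (i+1))` where `M i` is the value of the convex
program maximizing `-lamK x` subject to `t i * ∑ j exp (x j - x i⋆) ≤ 1`. -/
theorem output_layer_softmax_affine_bound
    (n : ℕ) (l u : Fin n → ℝ) (hlu : l ≤ u) (istar : Fin n)
    (lamK : (Fin n → ℝ) → ℝ)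
    (haff : ∃ (a : Fin n → ℝ) (a0 : ℝ), ∀ x, lamK x = (∑ j, a j * x j) + a0)
    (N : ℕ) (hN : 2 ≤ N) (t : ℕ → ℝ)
    (hmono : ∀ i j, i ≤ j → j < N → t i ≤ t j)
    (ht0 : t 0 = sInf ((fun x => Real.exp (x istar) / ∑ j, Real.exp (x j)) ''
        Set.Icc l u))
    (htN : t (N - 1) = sSup ((fun x => Real.exp (x istar) / ∑ j, Real.exp (x j)) ''
        Set.Icc l u)) :
    (⨆ x ∈ Set.Icc l u,
        ((Real.exp (x istar) / (∑ j, Real.exp (x j)) - lamK x : ℝ) : EReal)) ≤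
      ⨆ i ∈ Finset.range (N - 1),
        ((⨆ x ∈ {x : Fin n → ℝ | x ∈ Set.Icc l u ∧
              t i * ∑ j, Real.exp (x j - x istar) ≤ 1},
            ((-lamK x : ℝ) : EReal))
          + ((t (i + 1) : ℝ) : EReal)) := by
  set c : (Fin n → ℝ) → ℝ := fun x => Real.exp (x istar) / ∑ j, Real.exp (x j) with hc
  have hSpos : ∀ x : Fin n → ℝ, (0:ℝ) < ∑ j, Real.exp (x j) := by
    intro x
    exact Finset.sum_pos (fun j _ => Real.exp_pos _) ⟨istar, Finset.mem_univ _⟩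
  have hcpos : ∀ x, 0 < c x := fun x => div_pos (Real.exp_pos _) (hSpos x)
  have hcle1 : ∀ x, c x ≤ 1 := by
    intro x
    rw [hc]
    exact div_le_one_of_le₀
      (Finset.single_le_sum (fun j _ => (Real.exp_pos (x j)).le) (Finset.mem_univ istar))
      (hSpos x).le
  -- bounds on the image set
  have hbddb : BddBelow (c '' Set.Icc l u) := by
    refine ⟨0, ?_⟩
    rintro y ⟨x, _, rfl⟩
    exact (hcpos x).le
  have hbdda : BddAbove (c '' Set.Icc l u) := by
    refine ⟨1, ?_⟩
    rintro y ⟨x, _, rfl⟩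
    exact hcle1 x
  refine iSup₂_le fun x hx => ?_
  -- `t 0 ≤ c x ≤ t (N-1)`
  have hmem : c x ∈ c '' Set.Icc l u := ⟨x, hx, rfl⟩
  have h0c : t 0 ≤ c x := by rw [ht0]; exact csInf_le hbddb hmem
  have hcN : c x ≤ t (N - 1) := by rw [htN]; exact le_csSup hbdda hmem
  -- choose the index
  have hN1 : 1 ≤ N - 1 := by omega
  obtain ⟨i, hiN, hti, hti1⟩ :
      ∃ i, i < N - 1 ∧ t i ≤ c x ∧ c x ≤ t (i + 1) := by
    by_cases hall : ∀ i < N - 1, t i ≤ c x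
    · exact ⟨N - 2, by omega, hall _ (by omega), by
        have : N - 2 + 1 = N - 1 := by omega
        rw [this]; exact hcN⟩
    · push_neg at hall
      obtain ⟨k, hk, hkc⟩ := hall
      classical
      have hex : ∃ m, c x < t m := ⟨k, hkc⟩
      set k0 := Nat.find hex with hk0
      have hk0k : k0 ≤ k := Nat.find_le hkc
      have hk0pos : 0 < k0 := by
        rcases Nat.eq_zero_or_pos k0 with h | h
        · have hs := Nat.find_spec hex
          rw [← hk0, h] at hs
          exact absurd hs (not_lt.2 h0c)
        · exact h
      refine ⟨k0 - 1, by omega, ?_, ?_⟩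
      · exact le_of_not_gt (Nat.find_min hex (by omega))
      · have : k0 - 1 + 1 = k0 := by omega
        rw [this]
        exact (Nat.find_spec hex).le
  -- x satisfies the constraint of problem i
  have hxS : x ∈ {x : Fin n → ℝ | x ∈ Set.Icc l u ∧
      t i * ∑ j, Real.exp (x j - x istar) ≤ 1} := by
    refine ⟨hx, ?_⟩
    have hsum : ∑ j, Real.exp (x j - x istar)
        = (∑ j, Real.exp (x j)) / Real.exp (x istar) := by
      rw [Finset.sum_div]
      exact Finset.sum_congr rfl fun j _ => by rw [Real.exp_sub]
    rw [hsum]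
    have hle : t i * ((∑ j, Real.exp (x j)) / Real.exp (x istar))
        ≤ c x * ((∑ j, Real.exp (x j)) / Real.exp (x istar)) :=
      mul_le_mul_of_nonneg_right hti
        (div_nonneg (hSpos x).le (Real.exp_pos _).le)
    refine hle.trans ?_
    rw [hc]
    field_simp
    exact le_of_eq (by
      exact div_self (hSpos x).ne')
  -- conclude
  calc ((c x - lamK x : ℝ) : EReal)
      = ((-lamK x : ℝ) : EReal) + ((c x : ℝ) : EReal) := by
        rw [← EReal.coe_add]; ring_nf
    _ ≤ (⨆ y ∈ {x : Fin n → ℝ | x ∈ Set.Icc l u ∧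
          t i * ∑ j, Real.exp (x j - x istar) ≤ 1},
            ((-lamK y : ℝ) : EReal)) + ((t (i + 1) : ℝ) : EReal) := by
        gcongr
        · exact le_iSup₂ (f := fun y _ => ((-lamK y : ℝ) : EReal)) x hxS
    _ ≤ _ := le_iSup₂ (f := fun (i' : ℕ) (_ : i' ∈ Finset.range (N - 1)) =>
          (⨆ y ∈ {x : Fin n → ℝ | x ∈ Set.Icc l u ∧
              t i' * ∑ j, Real.exp (x j - x istar) ≤ 1},
            ((-lamK y : ℝ) : EReal)) + ((t (i' + 1) : ℝ) : EReal))
          i (Finset.mem_range.2 hiN)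
end

section
/- Nonexistence of stationary points of the softmax-plus-linear objective (part of Proposition in Appendix, thm:softmax_exact_a): Fix C >= 0, an index i in {1, ..., n}, and lambda in R^n, and define f : R^n -> R by f(x) = exp(x_i) / (sum_{j=1}^n exp(x_j) + C) + sum_{j=1}^n lambda_j x_j. If lambda_i is not in the interval [-1/4, 0], or if lambda_j <= 0 for some j != i, then f has no stationary points, i.e. there is no x in R^n with gradient of f at x equal to zero. -/
/-- Nonexistence of stationary points of the softmax-plus-linear objective
(part of Proposition thm:softmax_exact_a): if `lam i ∉ [-1/4, 0]`, or `lam j ≤ 0`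
for some `j ≠ i`, then `f x = exp (x i) / (∑ j exp (x j) + C) + ∑ j lam j * x j`
has no stationary point. -/
theorem softmax_linear_no_stationary_points
    (n : ℕ) (C : ℝ) (hC : 0 ≤ C) (i : Fin n) (lam : Fin n → ℝ)
    (h : lam i ∉ Set.Icc (-(1 / 4) : ℝ) 0 ∨ ∃ j, j ≠ i ∧ lam j ≤ 0) :
    ∀ x : Fin n → ℝ,
      fderiv ℝ (fun x : Fin n → ℝ =>
        Real.exp (x i) / ((∑ j, Real.exp (x j)) + C) + ∑ j, lam j * x j) x ≠ 0 := by
  intro x hfd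
  obtain ⟨S, hSdef⟩ : ∃ S : ℝ, S = ∑ j, Real.exp (x j) := ⟨_, rfl⟩
  have hSpos : 0 < S := hSdef ▸ Finset.sum_pos (fun k _ => Real.exp_pos _) ⟨i, Finset.mem_univ i⟩
  have hT : 0 < S + C := by linarith
  have hTne : S + C ≠ 0 := ne_of_gt hT
  have hTne' : (∑ j, Real.exp (x j)) + C ≠ 0 := hSdef ▸ hTne
  -- differentiability of f at x
  have hA : DifferentiableAt ℝ (fun y : Fin n → ℝ => Real.exp (y i)) x := by fun_prop
  have hB : DifferentiableAt ℝ (fun y : Fin n → ℝ => (∑ j, Real.exp (y j)) + C) x := by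
    fun_prop
  have hC' : DifferentiableAt ℝ (fun y : Fin n → ℝ => ∑ j, lam j * y j) x := by fun_prop
  have hdiff : DifferentiableAt ℝ (fun y : Fin n → ℝ =>
      Real.exp (y i) / ((∑ j, Real.exp (y j)) + C) + ∑ j, lam j * y j) x :=
    by
    simp only [div_eq_mul_inv]
    exact (hA.mul (hB.inv hTne')).add hC'
  -- directional derivatives along coordinate directions vanish
  have key : ∀ j : Fin n,
      (Real.exp (x i) * ((Pi.single j 1 : Fin n → ℝ) i) * (S + C)
        - Real.exp (x i) * Real.exp (x j)) / (S + C) ^ 2 + lam j = 0 := by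
    intro j
    set v : Fin n → ℝ := Pi.single j 1 with hv
    have hline : HasDerivAt (fun t : ℝ => x + t • v) v 0 := by
      simpa using ((hasDerivAt_id (0 : ℝ)).smul_const v).const_add x
    have hF0 : HasFDerivAt (fun y : Fin n → ℝ =>
        Real.exp (y i) / ((∑ j, Real.exp (y j)) + C) + ∑ j, lam j * y j)
        (0 : (Fin n → ℝ) →L[ℝ] ℝ) x := hfd ▸ hdiff.hasFDerivAt
    have hcomp : HasDerivAt (fun t : ℝ =>
        Real.exp ((x + t • v) i) / ((∑ k, Real.exp ((x + t • v) k)) + C)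
          + ∑ k, lam k * (x + t • v) k) 0 0 := by
      simpa [Function.comp_def] using hF0.comp_hasDerivAt_of_eq 0 hline (by simp)
    have hcomp' : HasDerivAt (fun t : ℝ =>
        Real.exp (x i + t * v i) / ((∑ k, Real.exp (x k + t * v k)) + C)
          + ∑ k, lam k * (x k + t * v k)) 0 0 := by
      simpa only [Pi.add_apply, Pi.smul_apply, smul_eq_mul] using hcomp
    -- explicit derivative computation
    have hcoord : ∀ k : Fin n, HasDerivAt (fun t : ℝ => x k + t * v k) (v k) 0 := by
      intro k
      simpa using ((hasDerivAt_id (0 : ℝ)).mul_const (v k)).const_add (x k)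
    have hNum : HasDerivAt (fun t : ℝ => Real.exp (x i + t * v i))
        (Real.exp (x i) * v i) 0 := by
      simpa using (hcoord i).exp
    have hDen : HasDerivAt (fun t : ℝ => (∑ k, Real.exp (x k + t * v k)) + C)
        (Real.exp (x j)) 0 := by
      have hs := (HasDerivAt.sum (u := Finset.univ)
        (fun k _ => (hcoord k).exp)).add_const C
      have : (∑ k, Real.exp (x k) * v k) = Real.exp (x j) := by
        simp [hv, Pi.single_apply]
      simpa [this] using hs
    have hLin : HasDerivAt (fun t : ℝ => ∑ k, lam k * (x k + t * v k)) (lam j) 0 := by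
      have hs := HasDerivAt.fun_sum (u := Finset.univ)
        (fun k _ => (hcoord k).const_mul (lam k))
      have : (∑ k, lam k * v k) = lam j := by
        simp [hv, Pi.single_apply]
      simpa [this] using hs
    have hDen0 : ((∑ k, Real.exp (x k + 0 * v k)) + C) ≠ 0 := by
      simpa using hTne'
    have htot := (hNum.div hDen hDen0).add hLin
    have heq := hcomp'.unique htot
    simpa [hSdef] using heq.symm
  rcases h with h1 | ⟨j, hji, hj⟩
  · exfalso
    apply h1
    have e := key i
    rw [Pi.single_eq_same] at e
    have hES : Real.exp (x i) ≤ S := hSdef ▸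
      Finset.single_le_sum (fun k _ => (Real.exp_pos (x k)).le) (Finset.mem_univ i)
    have hE : 0 < Real.exp (x i) := Real.exp_pos _
    have hT2 : 0 < (S + C) ^ 2 := by positivity
    have e' : lam i * (S + C) ^ 2
        = Real.exp (x i) * Real.exp (x i) - Real.exp (x i) * (S + C) := by
      field_simp at e
      nlinarith [e]
    constructor
    · nlinarith [sq_nonneg (S + C - 2 * Real.exp (x i))]
    · nlinarith
  · have e := key j
    rw [Pi.single_eq_of_ne (Ne.symm hji)] at e
    have hT2 : 0 < (S + C) ^ 2 := by positivity
    have hfrac : 0 < Real.exp (x i) * Real.exp (x j) / (S + C) ^ 2 :=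
      div_pos (mul_pos (Real.exp_pos _) (Real.exp_pos _)) hT2
    simp only [mul_zero, zero_mul, zero_sub, neg_div] at e
    linarith
end

section
/- Characterization of stationary points of the softmax-plus-linear objective for C > 0 (part of Proposition in Appendix, thm:softmax_exact_a): Fix C > 0, an index i in {1, ..., n}, and lambda in R^n with lambda_i in [-1/4, 0] and lambda_j >= 0 for all j != i. Define f(x) = exp(x_i) / (sum_{j=1}^n exp(x_j) + C) + sum_{j=1}^n lambda_j x_j. Define p in R^n by p_i = (1 + sqrt(1 + 4 lambda_i))/2 and p_j = 2 lambda_j / (1 + sqrt(1 + 4 lambda_i)) for j != i, and p' in R^n by p'_i = (1 - sqrt(1 + 4 lambda_i))/2 and p'_j = 2 lambda_j / (1 - sqrt(1 + 4 lambda_i)) for j != i (when the denominators are nonzero). Then f has at most two stationary points, and they are: if all entries of p are positive and sum_j p_j < 1, then x with x_j = log(p_j) + log(C / (1 - sum_k p_k)) is a stationary point of f; if all entries of p' are positive and sum_j p'_j < 1, then x' with x'_j = log(p'_j) + log(C / (1 - sum_k p'_k)) is a stationary point of f; and every stationary point of f is one of these two points. -/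
set_option maxHeartbeats 1000000

open Real Finset

private lemma proj_sum_single (n : ℕ) (a : Fin n → ℝ) (j : Fin n) :
    (∑ k, a k • ContinuousLinearMap.proj (R := ℝ) (φ := fun _ : Fin n => ℝ) k)
      (Pi.single j 1) = a j := by
  rw [ContinuousLinearMap.sum_apply]
  simp [ContinuousLinearMap.proj_apply, Pi.single_apply]

private lemma clm_zero_iff (n : ℕ) (L : (Fin n → ℝ) →L[ℝ] ℝ) :
    L = 0 ↔ ∀ j, L (Pi.single j 1) = 0 := by
  constructor
  · intro h j; rw [h]; rfl
  · intro h
    ext v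
    have hv : v = ∑ j, v j • (Pi.single j 1 : Fin n → ℝ) := by
      funext k
      simp [Finset.sum_apply, Pi.single_apply]
    rw [hv, map_sum]
    simp [h]

private lemma softmax_hasFDerivAt (n : ℕ) (C : ℝ) (i : Fin n) (lam : Fin n → ℝ)
    (x : Fin n → ℝ) (hT : (∑ j, Real.exp (x j)) + C ≠ 0) :
    HasFDerivAt (fun x : Fin n → ℝ =>
        Real.exp (x i) / ((∑ j, Real.exp (x j)) + C) + ∑ j, lam j * x j)
      ((Real.exp (x i) • ((-((((∑ j, Real.exp (x j)) + C)) ^ 2)⁻¹) •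
          (∑ j, Real.exp (x j) • ContinuousLinearMap.proj (R := ℝ) (φ := fun _ : Fin n => ℝ) j)) +
        (((∑ j, Real.exp (x j)) + C))⁻¹ •
          (Real.exp (x i) • ContinuousLinearMap.proj (R := ℝ) (φ := fun _ : Fin n => ℝ) i)) +
        ∑ j, lam j • ContinuousLinearMap.proj (R := ℝ) (φ := fun _ : Fin n => ℝ) j) x := by
  have hTfun : HasFDerivAt (fun y : Fin n → ℝ => (∑ j, Real.exp (y j)) + C)
      (∑ j, Real.exp (x j) • ContinuousLinearMap.proj (R := ℝ) (φ := fun _ : Fin n => ℝ) j) x := by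
    have := HasFDerivAt.fun_sum (u := Finset.univ)
      (fun j _ => (Real.hasDerivAt_exp (x j)).comp_hasFDerivAt x
        (ContinuousLinearMap.proj (R := ℝ) (φ := fun _ : Fin n => ℝ) j).hasFDerivAt)
    exact this.add_const C
  have hInv : HasFDerivAt (fun y : Fin n → ℝ => ((∑ j, Real.exp (y j)) + C)⁻¹)
      ((-((((∑ j, Real.exp (x j)) + C)) ^ 2)⁻¹) •
        (∑ j, Real.exp (x j) • ContinuousLinearMap.proj (R := ℝ) (φ := fun _ : Fin n => ℝ) j)) x :=
    (hasDerivAt_inv hT).comp_hasFDerivAt x hTfun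
  have hE : HasFDerivAt (fun y : Fin n → ℝ => Real.exp (y i))
      (Real.exp (x i) • ContinuousLinearMap.proj (R := ℝ) (φ := fun _ : Fin n => ℝ) i) x := by
    have := (Real.hasDerivAt_exp (x i)).comp_hasFDerivAt x
      (ContinuousLinearMap.proj (R := ℝ) (φ := fun _ : Fin n => ℝ) i).hasFDerivAt
    exact this
  have hLin : HasFDerivAt (fun y : Fin n → ℝ => ∑ j, lam j * y j)
      (∑ j, lam j • ContinuousLinearMap.proj (R := ℝ) (φ := fun _ : Fin n => ℝ) j) x :=
    HasFDerivAt.fun_sum (fun j _ =>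
      ((ContinuousLinearMap.proj (R := ℝ) (φ := fun _ : Fin n => ℝ) j).hasFDerivAt.const_mul (lam j)))
  simp only [div_eq_mul_inv]
  exact (hE.mul hInv).add hLin

private lemma stationary_iff (n : ℕ) (C : ℝ) (hC : 0 < C) (i : Fin n) (lam : Fin n → ℝ)
    (x : Fin n → ℝ) :
    fderiv ℝ (fun x : Fin n → ℝ =>
        Real.exp (x i) / ((∑ j, Real.exp (x j)) + C) + ∑ j, lam j * x j) x = 0 ↔
    ∀ j, (if j = i then Real.exp (x i) / ((∑ k, Real.exp (x k)) + C) else 0)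
        - (Real.exp (x i) / ((∑ k, Real.exp (x k)) + C)) *
            (Real.exp (x j) / ((∑ k, Real.exp (x k)) + C)) + lam j = 0 := by
  have hTpos : 0 < (∑ k, Real.exp (x k)) + C := by positivity
  have hD := softmax_hasFDerivAt n C i lam x hTpos.ne'
  rw [hD.fderiv, clm_zero_iff]
  refine forall_congr' fun j => ?_
  simp only [ContinuousLinearMap.add_apply, ContinuousLinearMap.smul_apply, proj_sum_single,
    ContinuousLinearMap.proj_apply, Pi.single_apply, smul_eq_mul]
  set T := (∑ k, Real.exp (x k)) + C with hTdef
  have hTne : T ≠ 0 := hTpos.ne'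
  rcases eq_or_ne j i with rfl | hj
  · simp only [if_true, eq_self_iff_true, mul_one]
    constructor <;> intro h
    · field_simp at h ⊢; linarith
    · field_simp at h ⊢; linarith
  · simp only [if_neg hj, if_neg (Ne.symm hj), mul_zero, add_zero, zero_sub]
    constructor <;> intro h
    · field_simp at h ⊢; linarith
    · field_simp at h ⊢; linarith

private lemma stationary_of (n : ℕ) (C : ℝ) (hC : 0 < C) (i : Fin n) (lam : Fin n → ℝ)
    (q : Fin n → ℝ) (hq : ∀ j, 0 < q j) (hs : ∑ k, q k < 1)
    (hqi : q i - q i * q i + lam i = 0) (hqj : ∀ j, j ≠ i → lam j = q i * q j) :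
    fderiv ℝ (fun x : Fin n → ℝ =>
        Real.exp (x i) / ((∑ j, Real.exp (x j)) + C) + ∑ j, lam j * x j)
      (fun j => Real.log (q j) + Real.log (C / (1 - ∑ k, q k))) = 0 := by
  have h1 : 0 < 1 - ∑ k, q k := by linarith
  set M := C / (1 - ∑ k, q k) with hM
  have hMpos : 0 < M := div_pos hC h1
  set x : Fin n → ℝ := fun j => Real.log (q j) + Real.log M with hx
  have hexp : ∀ j, Real.exp (x j) = q j * M := by
    intro j
    simp only [hx]
    rw [Real.exp_add, Real.exp_log (hq j), Real.exp_log hMpos]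
  have hT : (∑ k, Real.exp (x k)) + C = M := by
    simp only [hexp]
    rw [← Finset.sum_mul, hM]
    field_simp
    ring
  rw [stationary_iff n C hC i lam x]
  intro j
  rw [hT]
  simp only [hexp]
  have hql : ∀ k, q k * M / M = q k := fun k => by field_simp
  simp only [hql]
  rcases eq_or_ne j i with rfl | hj
  · simpa using hqi
  · rw [if_neg hj, hqj j hj]; ring

/-- Characterization of stationary points of the softmax-plus-linear objective for
`C > 0` (part of Proposition thm:softmax_exact_a): with `lam i ∈ [-1/4, 0]` and
`lam j ≥ 0` for `j ≠ i`, the candidate points built from `p` and `p'` are stationary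
whenever their defining conditions (positivity and sum `< 1`) hold, and every
stationary point of `f` is one of these two points (so there are at most two). -/
theorem softmax_linear_stationary_points_pos_C
    (n : ℕ) (C : ℝ) (hC : 0 < C) (i : Fin n) (lam : Fin n → ℝ)
    (hli : lam i ∈ Set.Icc (-(1 / 4) : ℝ) 0)
    (hlj : ∀ j, j ≠ i → 0 ≤ lam j) :
    let s : ℝ := Real.sqrt (1 + 4 * lam i)
    let f : (Fin n → ℝ) → ℝ := fun x =>
      Real.exp (x i) / ((∑ j, Real.exp (x j)) + C) + ∑ j, lam j * x j
    let p : Fin n → ℝ := fun j => if j = i then (1 + s) / 2 else 2 * lam j / (1 + s)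
    let p' : Fin n → ℝ := fun j => if j = i then (1 - s) / 2 else 2 * lam j / (1 - s)
    let xP : Fin n → ℝ := fun j => Real.log (p j) + Real.log (C / (1 - ∑ k, p k))
    let xP' : Fin n → ℝ := fun j => Real.log (p' j) + Real.log (C / (1 - ∑ k, p' k))
    ((∀ j, 0 < p j) → (∑ k, p k) < 1 → fderiv ℝ f xP = 0) ∧
    ((∀ j, 0 < p' j) → (∑ k, p' k) < 1 → fderiv ℝ f xP' = 0) ∧
    (∀ y : Fin n → ℝ, fderiv ℝ f y = 0 → y = xP ∨ y = xP') := by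
  intro s f p p' xP xP'
  have hsdef : s = Real.sqrt (1 + 4 * lam i) := rfl
  have hs0 : 0 ≤ s := Real.sqrt_nonneg _
  have hs2 : s ^ 2 = 1 + 4 * lam i := by
    rw [hsdef]; exact Real.sq_sqrt (by nlinarith [hli.1])
  have hpi : p i = (1 + s) / 2 := if_pos rfl
  have hpi' : p' i = (1 - s) / 2 := if_pos rfl
  refine ⟨?_, ?_, ?_⟩
  · intro hp hsum
    exact stationary_of n C hC i lam p hp hsum
      (by rw [hpi]; nlinarith [hs2])
      (fun j hj => by
        have h1s : (0:ℝ) < 1 + s := by linarith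
        show lam j = p i * p j
        rw [hpi, show p j = 2 * lam j / (1 + s) from if_neg hj]
        field_simp)
  · intro hp hsum
    have h1s : (0:ℝ) < 1 - s := by
      have := hp i; rw [hpi'] at this; linarith
    exact stationary_of n C hC i lam p' hp hsum
      (by rw [hpi']; nlinarith [hs2])
      (fun j hj => by
        show lam j = p' i * p' j
        rw [hpi', show p' j = 2 * lam j / (1 - s) from if_neg hj]
        field_simp)
  · intro y hy
    have hTpos : 0 < (∑ j, Real.exp (y j)) + C := by positivity
    set T := (∑ j, Real.exp (y j)) + C with hTdef
    set z : Fin n → ℝ := fun j => Real.exp (y j) / T with hz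
    have hzpos : ∀ j, 0 < z j := fun j => div_pos (Real.exp_pos _) hTpos
    have hcond := (stationary_iff n C hC i lam y).mp hy
    have hi' : z i - z i * z i + lam i = 0 := by
      have h := hcond i
      rw [if_pos rfl, ← hTdef] at h
      simpa [hz] using h
    have hj' : ∀ j, j ≠ i → lam j = z i * z j := by
      intro j hj
      have h := hcond j
      rw [if_neg hj, ← hTdef] at h
      simp only [hz]
      linarith
    have hsq : (2 * z i - 1 - s) * (2 * z i - 1 + s) = 0 := by nlinarith [hs2, hi']
    have hsumz : 1 - ∑ k, z k = C / T := by
      have h1 : ∑ k, z k = (∑ k, Real.exp (y k)) / T := by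
        simp only [hz]; rw [Finset.sum_div]
      have h2 : (∑ k, Real.exp (y k)) = T - C := by rw [hTdef]; ring
      rw [h1, h2]
      field_simp
      ring
    have hCz : C / (1 - ∑ k, z k) = T := by
      rw [hsumz, div_div_eq_mul_div, mul_comm, mul_div_assoc, div_self hC.ne', mul_one]
    have hyz : ∀ j, y j = Real.log (z j) + Real.log (C / (1 - ∑ k, z k)) := by
      intro j
      rw [hCz]
      simp only [hz]
      rw [Real.log_div (Real.exp_pos _).ne' hTpos.ne', Real.log_exp]
      ring
    rcases mul_eq_zero.mp hsq with h | h
    · left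
      have hzi : z i = (1 + s) / 2 := by linarith
      have hzp : z = p := by
        funext j
        rcases eq_or_ne j i with rfl | hj
        · rw [hzi, hpi]
        · have hlamj := hj' j hj
          have h2 : (1:ℝ) + s ≠ 0 := by nlinarith [hzpos i]
          rw [show p j = 2 * lam j / (1 + s) from if_neg hj, hlamj, hzi]
          field_simp
      funext j
      rw [hyz j, hzp]
    · right
      have hzi : z i = (1 - s) / 2 := by linarith
      have hzp : z = p' := by
        funext j
        rcases eq_or_ne j i with rfl | hj
        · rw [hzi, hpi']
        · have hlamj := hj' j hj
          have h2 : (1:ℝ) - s ≠ 0 := by nlinarith [hzpos i]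
          rw [show p' j = 2 * lam j / (1 - s) from if_neg hj, hlamj, hzi]
          field_simp
      funext j
      rw [hyz j, hzp]
end

section
/- Stationary points of the inverse-sum-of-exponentials objective (Proposition in Appendix, thm:softmax_exact_b): For C, D > 0 and lambda in R^n, define f : R^n -> R by f(x) = D / (sum_{j=1}^n exp(x_j) + C) + sum_{j=1}^n lambda_j x_j. Then f has a stationary point (a point where the gradient of f vanishes) if and only if lambda_j > 0 for all j and sum_j lambda_j <= D / (4C). When these conditions hold, the stationary points of f are exactly the points x^+ and x^- given by x^{±}_j = log(lambda_j / D) + 2 log(t^{±}), where t^{±} = (1 ± sqrt(1 - (4C/D) sum_j lambda_j)) / ((2/D) sum_j lambda_j). -/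
lemma quad_aux (L D C s a : ℝ) (hL : L ≠ 0) (hD : D ≠ 0)
    (hs2 : s ^ 2 * D = D - 4 * C * L) (ha : a ^ 2 - 2 * a = s ^ 2 - 1) :
    L * (a / ((2 / D) * L)) ^ 2 - D * (a / ((2 / D) * L)) + D * C = 0 := by
  field_simp
  ring_nf
  linear_combination (D^2) * ha + (D) * hs2

lemma prod_aux (L D C s : ℝ) (hL : L ≠ 0) (hD : D ≠ 0)
    (hs2 : s ^ 2 * D = D - 4 * C * L) :
    (1 + s) / ((2 / D) * L) * ((1 - s) / ((2 / D) * L)) = D * C / L := by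
  field_simp
  ring_nf
  linear_combination (-1) * hs2

lemma hasFDeriv_aux (n : ℕ) (C D : ℝ) (lam : Fin n → ℝ) (x : Fin n → ℝ)
    (hpos : (∑ j, Real.exp (x j)) + C ≠ 0) :
    HasFDerivAt (fun y : Fin n → ℝ => D / ((∑ j, Real.exp (y j)) + C) + ∑ j, lam j * y j)
      (∑ j, (lam j - D * Real.exp (x j) / ((∑ k, Real.exp (x k)) + C) ^ 2) •
        (ContinuousLinearMap.proj j : (Fin n → ℝ) →L[ℝ] ℝ)) x := by
  have hS : HasFDerivAt (fun y : Fin n → ℝ => (∑ j, Real.exp (y j)) + C)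
      (∑ j, Real.exp (x j) • (ContinuousLinearMap.proj j : (Fin n → ℝ) →L[ℝ] ℝ)) x := by
    refine (HasFDerivAt.fun_sum fun j _ => ?_).add_const C
    exact (Real.hasDerivAt_exp (x j)).comp_hasFDerivAt (f := fun y : Fin n → ℝ => y j) x (hasFDerivAt_apply j x)
  have hg : HasDerivAt (fun s : ℝ => D * s⁻¹)
      (D * (-(((∑ j, Real.exp (x j)) + C) ^ 2)⁻¹)) ((∑ j, Real.exp (x j)) + C) :=
    (hasDerivAt_inv hpos).const_mul D
  have hf1 := hg.comp_hasFDerivAt x hS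
  have hlin : HasFDerivAt (fun y : Fin n → ℝ => ∑ j, lam j * y j)
      (∑ j, lam j • (ContinuousLinearMap.proj j : (Fin n → ℝ) →L[ℝ] ℝ)) x :=
    HasFDerivAt.fun_sum fun j _ => (hasFDerivAt_apply j x).const_mul (lam j)
  have h := hf1.add hlin
  have key : ((D * (-(((∑ j, Real.exp (x j)) + C) ^ 2)⁻¹)) •
        (∑ j, Real.exp (x j) • (ContinuousLinearMap.proj j : (Fin n → ℝ) →L[ℝ] ℝ))
      + ∑ j, lam j • (ContinuousLinearMap.proj j : (Fin n → ℝ) →L[ℝ] ℝ))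
      = ∑ j, (lam j - D * Real.exp (x j) / ((∑ k, Real.exp (x k)) + C) ^ 2) •
        (ContinuousLinearMap.proj j : (Fin n → ℝ) →L[ℝ] ℝ) := by
    refine ContinuousLinearMap.ext fun v => ?_
    simp only [ContinuousLinearMap.add_apply, ContinuousLinearMap.smul_apply,
      ContinuousLinearMap.sum_apply, ContinuousLinearMap.proj_apply, smul_eq_mul,
      Finset.mul_sum, ← Finset.sum_add_distrib]
    refine Finset.sum_congr rfl fun j _ => ?_
    field_simp
    ring
  rw [key] at h
  exact h.congr_of_eventuallyEq (Filter.Eventually.of_forall fun y => by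
    simp [Function.comp, div_eq_mul_inv])

lemma stat_iff (n : ℕ) (C D : ℝ) (hC : 0 < C) (lam : Fin n → ℝ) (x : Fin n → ℝ) :
    fderiv ℝ (fun x : Fin n → ℝ => D / ((∑ j, Real.exp (x j)) + C) + ∑ j, lam j * x j) x = 0 ↔
    ∀ j, lam j = D * Real.exp (x j) / ((∑ k, Real.exp (x k)) + C) ^ 2 := by
  have hTpos : 0 < (∑ j, Real.exp (x j)) + C :=
    add_pos_of_nonneg_of_pos (Finset.sum_nonneg fun j _ => (Real.exp_pos _).le) hC
  rw [(hasFDeriv_aux n C D lam x hTpos.ne').fderiv]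
  constructor
  · intro h j
    have h2 : (∑ k, (lam k - D * Real.exp (x k) / ((∑ m, Real.exp (x m)) + C) ^ 2) •
        (ContinuousLinearMap.proj k : (Fin n → ℝ) →L[ℝ] ℝ)) (Pi.single j 1) = 0 := by
      rw [h]; rfl
    simp only [ContinuousLinearMap.sum_apply, ContinuousLinearMap.smul_apply,
      ContinuousLinearMap.proj_apply, smul_eq_mul, Pi.single_apply, mul_ite, mul_one,
      mul_zero, Finset.sum_ite_eq', Finset.mem_univ, if_true] at h2
    linarith
  · intro h
    refine Finset.sum_eq_zero fun j _ => ?_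
    rw [sub_eq_zero.mpr (h j), zero_smul]

/-- Stationary points of the inverse-sum-of-exponentials objective
(Proposition thm:softmax_exact_b): for `C, D > 0`,
`f x = D / (∑ j exp (x j) + C) + ∑ j lam j * x j` has a stationary point if and only
if all `lam j > 0` and `∑ j lam j ≤ D / (4C)`; and in that case the stationary points
are exactly the two points `x±` with `x±_j = log (lam j / D) + 2 log t±`, where
`t± = (1 ± √(1 - (4C/D) ∑ lam)) / ((2/D) ∑ lam)`. -/
theorem inv_sum_exp_stationary_points
    (n : ℕ) (C D : ℝ) (hC : 0 < C) (hD : 0 < D) (lam : Fin n → ℝ) :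
    let f : (Fin n → ℝ) → ℝ := fun x =>
      D / ((∑ j, Real.exp (x j)) + C) + ∑ j, lam j * x j
    let tPlus : ℝ :=
      (1 + Real.sqrt (1 - (4 * C / D) * ∑ j, lam j)) / ((2 / D) * ∑ j, lam j)
    let tMinus : ℝ :=
      (1 - Real.sqrt (1 - (4 * C / D) * ∑ j, lam j)) / ((2 / D) * ∑ j, lam j)
    let xPlus : Fin n → ℝ := fun j => Real.log (lam j / D) + 2 * Real.log tPlus
    let xMinus : Fin n → ℝ := fun j => Real.log (lam j / D) + 2 * Real.log tMinus
    ((∃ x : Fin n → ℝ, fderiv ℝ f x = 0) ↔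
      ((∀ j, 0 < lam j) ∧ (∑ j, lam j) ≤ D / (4 * C))) ∧
    (((∀ j, 0 < lam j) ∧ (∑ j, lam j) ≤ D / (4 * C)) →
      ∀ y : Fin n → ℝ, (fderiv ℝ f y = 0 ↔ (y = xPlus ∨ y = xMinus))) := by
  intro f tPlus tMinus xPlus xMinus
  have hstat : ∀ y : Fin n → ℝ, fderiv ℝ f y = 0 ↔
      ∀ j, lam j = D * Real.exp (y j) / ((∑ k, Real.exp (y k)) + C) ^ 2 :=
    fun y => stat_iff n C D hC lam y
  rcases Nat.eq_zero_or_pos n with hn | hn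
  · subst hn
    refine ⟨⟨fun _ => ⟨fun j => j.elim0, by simp; positivity⟩,
        fun _ => ⟨0, (hstat 0).2 fun j => j.elim0⟩⟩, ?_⟩
    intro _ y
    exact ⟨fun _ => Or.inl (funext fun j => j.elim0), fun _ => (hstat y).2 fun j => j.elim0⟩
  · haveI : Nonempty (Fin n) := Fin.pos_iff_nonempty.mp hn
    have fwd : (∃ x : Fin n → ℝ, fderiv ℝ f x = 0) →
        (∀ j, 0 < lam j) ∧ (∑ j, lam j) ≤ D / (4 * C) := by
      rintro ⟨x, hx⟩
      have h := (hstat x).1 hx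
      have hTpos : 0 < (∑ k, Real.exp (x k)) + C :=
        add_pos_of_nonneg_of_pos (Finset.sum_nonneg fun j _ => (Real.exp_pos _).le) hC
      have hlam : ∀ j, 0 < lam j := fun j =>
        (h j) ▸ div_pos (mul_pos hD (Real.exp_pos _)) (pow_pos hTpos 2)
      refine ⟨hlam, ?_⟩
      have hsum : (∑ j, lam j) * ((∑ k, Real.exp (x k)) + C) ^ 2
          = D * (∑ k, Real.exp (x k)) := by
        rw [Finset.sum_congr rfl fun j _ => h j, ← Finset.sum_div, ← Finset.mul_sum]
        field_simp
      have e1 : (2 * (∑ j, lam j) * ((∑ k, Real.exp (x k)) + C) - D) ^ 2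
          = D ^ 2 - 4 * (∑ j, lam j) * D * C := by
        linear_combination (4 * (∑ j, lam j)) * hsum
      have e2 : 0 ≤ D ^ 2 - 4 * (∑ j, lam j) * D * C := e1 ▸ sq_nonneg _
      rw [le_div_iff₀ (by positivity)]
      nlinarith [e2, hD]
    have master : (∀ j, 0 < lam j) → (∑ j, lam j) ≤ D / (4 * C) →
        ∀ y : Fin n → ℝ, (fderiv ℝ f y = 0 ↔ (y = xPlus ∨ y = xMinus)) := by
      intro hlam hle y
      have hL : 0 < ∑ j, lam j := Finset.sum_pos (fun j _ => hlam j) Finset.univ_nonempty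
      have h1 : 0 ≤ 1 - (4 * C / D) * ∑ j, lam j := by
        have h4 : (∑ j, lam j) * (4 * C) ≤ D := (le_div_iff₀ (by positivity)).1 hle
        rw [sub_nonneg, div_mul_eq_mul_div, div_le_one hD]
        nlinarith
      have hs0 : 0 ≤ Real.sqrt (1 - (4 * C / D) * ∑ j, lam j) := Real.sqrt_nonneg _
      have hs2 : (Real.sqrt (1 - (4 * C / D) * ∑ j, lam j)) ^ 2
          = 1 - (4 * C / D) * ∑ j, lam j := Real.sq_sqrt h1
      have hs2' : (Real.sqrt (1 - (4 * C / D) * ∑ j, lam j)) ^ 2 * D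
          = D - 4 * C * ∑ j, lam j := by
        rw [hs2]; field_simp
      have hs1 : Real.sqrt (1 - (4 * C / D) * ∑ j, lam j) < 1 := by
        nlinarith [mul_pos (div_pos (by positivity : (0:ℝ) < 4 * C) hD) hL]
      have hden : 0 < (2 / D) * ∑ j, lam j := by positivity
      have htp : 0 < tPlus := div_pos (by linarith) hden
      have htm : 0 < tMinus := div_pos (by linarith) hden
      have hqp : (∑ j, lam j) * tPlus ^ 2 - D * tPlus + D * C = 0 :=
        quad_aux _ D C _ _ hL.ne' hD.ne' hs2' (by ring)
      have hqm : (∑ j, lam j) * tMinus ^ 2 - D * tMinus + D * C = 0 :=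
        quad_aux _ D C _ _ hL.ne' hD.ne' hs2' (by ring)
      have claim : ∀ t : ℝ, 0 < t → (∑ j, lam j) * t ^ 2 - D * t + D * C = 0 →
          ∀ j, lam j = D * Real.exp (Real.log (lam j / D) + 2 * Real.log t) /
            ((∑ k, Real.exp (Real.log (lam k / D) + 2 * Real.log t)) + C) ^ 2 := by
        intro t ht hq j
        have hexp : ∀ k, Real.exp (Real.log (lam k / D) + 2 * Real.log t)
            = lam k / D * t ^ 2 := by
          intro k
          rw [Real.exp_add, Real.exp_log (div_pos (hlam k) hD), two_mul, Real.exp_add,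
            Real.exp_log ht]
          ring
        have hsum : (∑ k, Real.exp (Real.log (lam k / D) + 2 * Real.log t))
            = (∑ k, lam k) / D * t ^ 2 := by
          rw [Finset.sum_congr rfl fun k _ => hexp k, ← Finset.sum_mul, ← Finset.sum_div]
        have hT : (∑ k, Real.exp (Real.log (lam k / D) + 2 * Real.log t)) + C = t := by
          rw [hsum]
          field_simp
          linear_combination hq
        rw [hexp j, hT]
        field_simp [ht.ne']
      constructor
      · intro hy
        have h := (hstat y).1 hy
        have hTpos : 0 < (∑ k, Real.exp (y k)) + C :=
          add_pos_of_nonneg_of_pos (Finset.sum_nonneg fun j _ => (Real.exp_pos _).le) hC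
        have hsum : (∑ j, lam j) * ((∑ k, Real.exp (y k)) + C) ^ 2
            = D * (∑ k, Real.exp (y k)) := by
          rw [Finset.sum_congr rfl fun j _ => h j, ← Finset.sum_div, ← Finset.mul_sum]
          field_simp
        have hq : (∑ j, lam j) * ((∑ k, Real.exp (y k)) + C) ^ 2
            - D * ((∑ k, Real.exp (y k)) + C) + D * C = 0 := by linarith
        have hpr : tPlus * tMinus = D * C / (∑ j, lam j) :=
          prod_aux _ D C _ hL.ne' hD.ne' hs2'
        have hsr : tPlus + tMinus = D / (∑ j, lam j) := by
          rw [← add_div]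
          rw [show (1 + Real.sqrt (1 - (4 * C / D) * ∑ j, lam j))
              + (1 - Real.sqrt (1 - (4 * C / D) * ∑ j, lam j)) = 2 from by ring]
          rw [div_eq_div_iff hden.ne' hL.ne']
          field_simp
        have hfac : ((∑ k, Real.exp (y k)) + C - tPlus)
            * ((∑ k, Real.exp (y k)) + C - tMinus) = 0 := by
          have hexpand : ((∑ k, Real.exp (y k)) + C - tPlus)
              * ((∑ k, Real.exp (y k)) + C - tMinus)
              = ((∑ k, Real.exp (y k)) + C) ^ 2
                - (tPlus + tMinus) * ((∑ k, Real.exp (y k)) + C) + tPlus * tMinus := by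
            ring
          rw [hexpand, hsr, hpr]
          field_simp
          linear_combination hq
        have key : ∀ t : ℝ, 0 < t → (∑ k, Real.exp (y k)) + C = t →
            y = fun j => Real.log (lam j / D) + 2 * Real.log t := by
          intro t ht hT
          funext j
          have h1 : Real.exp (y j) = lam j / D * t ^ 2 := by
            have h2 := h j
            rw [hT, eq_comm, div_eq_iff (by positivity)] at h2
            field_simp
            linarith
          calc y j = Real.log (Real.exp (y j)) := (Real.log_exp _).symm
            _ = Real.log (lam j / D * t ^ 2) := by rw [h1]
            _ = Real.log (lam j / D) + 2 * Real.log t := by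
                rw [Real.log_mul (div_pos (hlam j) hD).ne' (pow_ne_zero 2 ht.ne'),
                  Real.log_pow]
                norm_num
        rcases mul_eq_zero.1 hfac with h0 | h0
        · exact Or.inl (key tPlus htp (by linarith [sub_eq_zero.1 h0]))
        · exact Or.inr (key tMinus htm (by linarith [sub_eq_zero.1 h0]))
      · rintro (rfl | rfl)
        · exact (hstat xPlus).2 (claim tPlus htp hqp)
        · exact (hstat xMinus).2 (claim tMinus htm hqm)
    exact ⟨⟨fwd, fun hc => ⟨xPlus, (master hc.1 hc.2 xPlus).2 (Or.inl rfl)⟩⟩,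
      fun hc => master hc.1 hc.2⟩
end

section
/- Upper bound on the softmax output-layer problem with diagonal quadratic multipliers (Proposition in Appendix, thm:softmax_general): Let l <= u in R^n (componentwise), mu, alpha, beta in R^n. Let t_1 <= t_2 <= ... <= t_N be real numbers with t_1 = min_i mu_i and t_N = max_i mu_i. For j = 1, ..., N-1 define M_j = inf over theta in R of [ max over t in {t_j, t_{j+1}} of ( t + sum_{i=1}^n sup over z in [l_i, u_i] of ((mu_i - t) theta exp(z) - alpha_i z - beta_i z^2) ) ]. Then sup over x with l <= x <= u of [ (sum_i mu_i exp(x_i)) / (sum_i exp(x_i)) - sum_i (alpha_i x_i + beta_i x_i^2) ] <= max over j in {1, ..., N-1} of M_j. -/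
private def erealCoeHom : ℝ →+ EReal where
  toFun := Real.toEReal
  map_zero' := rfl
  map_add' := EReal.coe_add

open Classical in
private lemma find_interval (N : ℕ) (hN : 2 ≤ N) (t : ℕ → ℝ) (T : ℝ)
    (h0 : t 0 ≤ T) (h1 : T ≤ t (N - 1)) :
    ∃ j, j < N - 1 ∧ t j ≤ T ∧ T ≤ t (j + 1) := by
  set S : Finset ℕ := (Finset.range (N - 1)).filter (fun k => t k ≤ T) with hS
  have h0S : 0 ∈ S := by
    exact Finset.mem_filter.mpr ⟨Finset.mem_range.mpr (by omega), h0⟩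
  have hSne : S.Nonempty := ⟨0, h0S⟩
  obtain ⟨hr, hle⟩ := Finset.mem_filter.mp (S.max'_mem hSne)
  refine ⟨S.max' hSne, Finset.mem_range.mp hr, hle, ?_⟩
  by_cases hlast : S.max' hSne + 1 = N - 1
  · rw [hlast]; exact h1
  · by_contra hc
    push_neg at hc
    have hmem2 : S.max' hSne + 1 ∈ S := by
      exact Finset.mem_filter.mpr ⟨Finset.mem_range.mpr (by
        have := Finset.mem_range.mp hr; omega), hc.le⟩
    have := S.le_max' _ hmem2
    omega

/-- Upper bound on the softmax output-layer problem with diagonal quadratic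
multipliers (Proposition thm:softmax_general):
`sup_{l ≤ x ≤ u} μᵀ softmax(x) - ∑ᵢ (αᵢ xᵢ + βᵢ xᵢ²) ≤ max_j M_j` where
`M_j = inf_θ max_{t ∈ {t_j, t_{j+1}}} (t + ∑ᵢ sup_{z ∈ [lᵢ, uᵢ]}
((μᵢ - t) θ exp(z) - αᵢ z - βᵢ z²))`. -/
theorem softmax_quadratic_multiplier_bound
    (n : ℕ) (hn : 0 < n) (l u μ α β : Fin n → ℝ) (hlu : l ≤ u)
    (N : ℕ) (hN : 2 ≤ N) (t : ℕ → ℝ)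
    (hmono : ∀ i j, i ≤ j → j < N → t i ≤ t j)
    (ht0 : t 0 = Finset.univ.inf' (Finset.univ_nonempty_iff.mpr ⟨⟨0, hn⟩⟩) μ)
    (htN : t (N - 1) = Finset.univ.sup' (Finset.univ_nonempty_iff.mpr ⟨⟨0, hn⟩⟩) μ) :
    (⨆ x ∈ Set.Icc l u,
        (((∑ i, μ i * Real.exp (x i)) / (∑ i, Real.exp (x i))
            - ∑ i, (α i * x i + β i * x i ^ 2) : ℝ) : EReal)) ≤
      ⨆ j ∈ Finset.range (N - 1),
        ⨅ θ : ℝ,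
          max
            (((t j : ℝ) : EReal) + ∑ i, ⨆ z ∈ Set.Icc (l i) (u i),
              (((μ i - t j) * θ * Real.exp z - α i * z - β i * z ^ 2 : ℝ) : EReal))
            (((t (j + 1) : ℝ) : EReal) + ∑ i, ⨆ z ∈ Set.Icc (l i) (u i),
              (((μ i - t (j + 1)) * θ * Real.exp z - α i * z - β i * z ^ 2 : ℝ) :
                EReal)) := by
  refine iSup₂_le fun x hx => ?_
  -- Notation
  set D : ℝ := ∑ i, Real.exp (x i) with hD
  set M : ℝ := ∑ i, μ i * Real.exp (x i) with hM
  set q : ℝ := ∑ i, (α i * x i + β i * x i ^ 2) with hq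
  have huniv : (Finset.univ : Finset (Fin n)).Nonempty :=
    Finset.univ_nonempty_iff.mpr ⟨⟨0, hn⟩⟩
  have hDpos : 0 < D := Finset.sum_pos (fun i _ => Real.exp_pos _) huniv
  set T : ℝ := M / D with hT
  have hTD : T * D = M := div_mul_cancel₀ M hDpos.ne'
  -- T is between t 0 and t (N-1)
  have hT0 : t 0 ≤ T := by
    rw [ht0, hT, le_div_iff₀ hDpos, hD, Finset.mul_sum]
    exact Finset.sum_le_sum fun i _ =>
      mul_le_mul_of_nonneg_right (Finset.inf'_le _ (Finset.mem_univ i))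
        (Real.exp_pos _).le
  have hTN : T ≤ t (N - 1) := by
    rw [htN, hT, div_le_iff₀ hDpos, hD, Finset.mul_sum]
    exact Finset.sum_le_sum fun i _ =>
      mul_le_mul_of_nonneg_right (Finset.le_sup' _ (Finset.mem_univ i))
        (Real.exp_pos _).le
  obtain ⟨j, hj, hjT, hTj⟩ := find_interval N hN t T hT0 hTN
  refine le_trans ?_ (le_iSup₂ (f := fun j (_ : j ∈ Finset.range (N - 1)) => _)
    j (Finset.mem_range.mpr hj))
  refine le_iInf fun θ => ?_
  -- Real-valued auxiliary function
  set G : ℝ → ℝ := fun s =>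
    s + ∑ i, ((μ i - s) * θ * Real.exp (x i) - α i * x i - β i * x i ^ 2) with hG
  have hGeq : ∀ s, G s = (1 - θ * D) * s + θ * M - q := by
    intro s
    have h1 : ∑ i, ((μ i - s) * θ * Real.exp (x i) - α i * x i - β i * x i ^ 2)
        = θ * M - θ * s * D - q := by
      rw [hM, hD, hq, Finset.mul_sum, Finset.mul_sum, ← Finset.sum_sub_distrib,
        ← Finset.sum_sub_distrib]
      exact Finset.sum_congr rfl fun i _ => by ring
    show s + _ = _
    rw [h1]; ring
  have hfx : T - q = G T := by
    rw [hGeq]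
    have : θ * (T * D) = θ * M := by rw [hTD]
    nlinarith [this]
  -- G at T is at most max of G at the endpoints
  have hmax : T - q ≤ max (G (t j)) (G (t (j + 1))) := by
    rw [hfx]
    rcases le_or_gt 0 (1 - θ * D) with hc | hc
    · refine le_max_of_le_right ?_
      rw [hGeq, hGeq]
      nlinarith
    · refine le_max_of_le_left ?_
      rw [hGeq, hGeq]
      nlinarith
  -- EReal bound: coe (G s) ≤ s + ∑ sup
  have hkey : ∀ s : ℝ,
      ((G s : ℝ) : EReal) ≤ (s : EReal) + ∑ i, ⨆ z ∈ Set.Icc (l i) (u i),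
        (((μ i - s) * θ * Real.exp z - α i * z - β i * z ^ 2 : ℝ) : EReal) := by
    intro s
    have hcoe : ((G s : ℝ) : EReal) = (s : EReal) + ∑ i,
        (((μ i - s) * θ * Real.exp (x i) - α i * x i - β i * x i ^ 2 : ℝ) : EReal) := by
      show ((_ + _ : ℝ) : EReal) = _
      rw [EReal.coe_add]
      exact congrArg (fun a => (s : EReal) + a) (map_sum erealCoeHom _ Finset.univ)
    rw [hcoe]
    refine add_le_add_right (Finset.sum_le_sum fun i _ => ?_) _
    exact le_iSup₂ (f := fun z (_ : z ∈ Set.Icc (l i) (u i)) =>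
      (((μ i - s) * θ * Real.exp z - α i * z - β i * z ^ 2 : ℝ) : EReal))
      (x i) ⟨hx.1 i, hx.2 i⟩
  calc ((M / D - q : ℝ) : EReal) ≤ ((max (G (t j)) (G (t (j + 1))) : ℝ) : EReal) :=
        EReal.coe_le_coe_iff.mpr hmax
    _ ≤ _ := by
        rcases max_cases (G (t j)) (G (t (j + 1))) with ⟨h, _⟩ | ⟨h, _⟩
        · rw [h]; exact le_max_of_le_left (hkey (t j))
        · rw [h]; exact le_max_of_le_right (hkey (t (j + 1)))
end
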